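/- On the holomorphic tangent bundle T'E of a holomorphic Lie algebroid E, the map Υ = p′_* ∘ ρ_*, where ρ_* is the tangent map of the anchor and p′_* the tangent map of the projection T'M → M, satisfies [Z, fW]_{T'E} = f[Z,W]_{T'E} + (Υ(Z)f)·W for all sections Z,W of T'E over M and functions f on M. Consequently T'E carries a Lie algebroid structure over M with anchor Υ. -/

import Mathlib

open scoped BigOperators

noncomputable section

/-- Total space of the bundle `E`, in local coordinates `(z, u) ∈ ℂⁿ × ℂᵐ`. -/
abbrev TotE (n m : ℕ) := (Fin n → ℂ) × (Fin m → ℂ)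

/-- `∂f/∂zʲ` on the total space. -/
def pdz {n m : ℕ} (j : Fin n) (f : TotE n m → ℂ) (p : TotE n m) : ℂ :=
  fderiv ℂ f p (Pi.single j 1, 0)

/-- `∂f/∂u^β` on the total space. -/
def pdu {n m : ℕ} (β : Fin m) (f : TotE n m → ℂ) (p : TotE n m) : ℂ :=
  fderiv ℂ f p (0, Pi.single β 1)

/-- `∂f/∂zᵏ` on the base. -/
def pd {n : ℕ} (k : Fin n) (f : (Fin n → ℂ) → ℂ) (z : Fin n → ℂ) : ℂ :=
  fderiv ℂ f z (Pi.single k 1)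

/-- A (holomorphic) vector field on the total space `E`, through its components. -/
structure VFE (n m : ℕ) where
  z : Fin n → TotE n m → ℂ
  u : Fin m → TotE n m → ℂ

/-- Action of a vector field on a function. -/
def act {n m : ℕ} (X : VFE n m) (f : TotE n m → ℂ) (p : TotE n m) : ℂ :=
  ∑ j, X.z j p * pdz j f p + ∑ β, X.u β p * pdu β f p

/-- `z`-components of the Lie bracket `[X,Y]`. -/
def brkz {n m : ℕ} (X Y : VFE n m) (i : Fin n) (p : TotE n m) : ℂ :=
  act X (Y.z i) p - act Y (X.z i) p

/-- `u`-components of the Lie bracket `[X,Y]`. -/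
def brku {n m : ℕ} (X Y : VFE n m) (α : Fin m) (p : TotE n m) : ℂ :=
  act X (Y.u α) p - act Y (X.u α) p

/-- For sections `Z, W` of `T'E` and a function `f` on the base `M`
(so `∂f/∂u^α = 0`), with `Υ(Z)f = Z^k ∂f/∂zᵏ`, one has
`[Z, fW] = f[Z,W] + (Υ(Z)f)·W`; hence `Υ` anchors a Lie algebroid structure on `T'E`. -/
lemma fderiv_base {n m : ℕ} (f : (Fin n → ℂ) → ℂ) (hf : Differentiable ℂ f)
    (p : TotE n m) (v : TotE n m) :
    fderiv ℂ (fun q : TotE n m => f q.1) p v = fderiv ℂ f p.1 v.1 := by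
  have h : HasFDerivAt (fun q : TotE n m => f q.1)
      ((fderiv ℂ f p.1).comp (ContinuousLinearMap.fst ℂ _ _)) p :=
    (hf p.1).hasFDerivAt.comp p hasFDerivAt_fst
  rw [h.fderiv]; rfl

lemma myFderivMul {n m : ℕ} (g h : TotE n m → ℂ) (hg : Differentiable ℂ g)
    (hh : Differentiable ℂ h) (p : TotE n m) (v : TotE n m) :
    fderiv ℂ (fun q => g q * h q) p v
      = fderiv ℂ g p v * h p + g p * fderiv ℂ h p v := by
  rw [fderiv_fun_mul (hg p) (hh p)]
  simp [mul_comm]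
  ring

theorem stmt_3 {n m : ℕ} (Z W : VFE n m) (f : (Fin n → ℂ) → ℂ)
    (hZz : ∀ i, ContDiff ℂ ⊤ (Z.z i)) (hZu : ∀ α, ContDiff ℂ ⊤ (Z.u α))
    (hWz : ∀ i, ContDiff ℂ ⊤ (W.z i)) (hWu : ∀ α, ContDiff ℂ ⊤ (W.u α))
    (hf : ContDiff ℂ ⊤ f) :
    let fE : TotE n m → ℂ := fun p => f p.1
    let fW : VFE n m := ⟨fun i p => fE p * W.z i p, fun α p => fE p * W.u α p⟩
    let Υf : TotE n m → ℂ := fun p => ∑ k, Z.z k p * pd k f p.1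
    (∀ i p, brkz Z fW i p = fE p * brkz Z W i p + Υf p * W.z i p) ∧
    (∀ α p, brku Z fW α p = fE p * brku Z W α p + Υf p * W.u α p) := by
  intro fE fW Υf
  have hfd : Differentiable ℂ f := hf.differentiable (by simp)
  have hfE : Differentiable ℂ fE := fun p => ((hfd p.1).hasFDerivAt.comp p hasFDerivAt_fst).differentiableAt
  -- key: action of Z on fE * g
  have key : ∀ (g : TotE n m → ℂ), Differentiable ℂ g → ∀ p,
      act Z (fun q => fE q * g q) p = Υf p * g p + fE p * act Z g p := by
    intro g hg p
    have hz : ∀ j, pdz j (fun q => fE q * g q) p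
        = pd j f p.1 * g p + fE p * pdz j g p := by
      intro j
      unfold pdz
      rw [myFderivMul fE g hfE hg]
      rw [fderiv_base f hfd]
      rfl
    have hu : ∀ β, pdu β (fun q => fE q * g q) p = fE p * pdu β g p := by
      intro β
      unfold pdu
      rw [myFderivMul fE g hfE hg]
      rw [fderiv_base f hfd]
      simp
    have e1 : Υf p * g p = ∑ j, Z.z j p * (pd j f p.1 * g p) := by
      simp only [Υf, Finset.sum_mul]
      exact Finset.sum_congr rfl fun _ _ => by ring
    have e2 : fE p * act Z g p
        = ∑ j, Z.z j p * (fE p * pdz j g p) + ∑ β, Z.u β p * (fE p * pdu β g p) := by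
      simp only [act, mul_add, Finset.mul_sum]
      congr 1 <;> exact Finset.sum_congr rfl fun _ _ => by ring
    rw [e1, e2]
    unfold act
    simp only [hz, hu, mul_add, Finset.sum_add_distrib]
    ring
  -- action of fW on g
  have key2 : ∀ (g : TotE n m → ℂ) p, act fW g p = fE p * act W g p := by
    intro g p
    unfold act
    simp only [fW]
    rw [mul_add, Finset.mul_sum, Finset.mul_sum]
    congr 1 <;> exact Finset.sum_congr rfl fun _ _ => by ring
  constructor
  · intro i p
    have := key (W.z i) ((hWz i).differentiable (by simp)) p
    unfold brkz
    show act Z (fun q => fE q * W.z i q) p - act fW (Z.z i) p = _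
    rw [this, key2]
    ring
  · intro α p
    have := key (W.u α) ((hWu α).differentiable (by simp)) p
    unfold brku
    show act Z (fun q => fE q * W.u α q) p - act fW (Z.u α) p = _
    rw [this, key2]
    ring

end
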